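/- For every ring R with unit (1 ≠ 0), the category of finitely generated free left R-modules and R-linear maps is not residually finite. -/

import Mathlib

open CategoryTheory

/-- A category is residually finite if any two distinct parallel morphisms
can be separated by a functor to a finite category. -/
def ResiduallyFiniteCat (C : Type*) [Category C] : Prop :=
  ∀ {X Y : C} (f g : X ⟶ Y), f ≠ g →
    ∃ (D : Type) (_ : SmallCategory D) (_ : FinCategory D) (F : C ⥤ D),
      F.map f ≠ F.map g

/-- The category of finitely generated free left `R`-modules, as the full
subcategory of `ModuleCat R` on modules isomorphic to some `R^n`. -/
abbrev FreeModCat (R : Type) [Ring R] :=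
  CategoryTheory.ObjectProperty.FullSubcategory
    (fun M : ModuleCat.{0} R => ∃ n : ℕ, Nonempty (M ≃ₗ[R] (Fin n → R)))

/-- The object `R^k` of `FreeModCat R`. -/
def Amod (R : Type) [Ring R] (k : ℕ) : FreeModCat R :=
  ⟨ModuleCat.of R (Fin k → R), k, ⟨LinearEquiv.refl R _⟩⟩

/-- The morphism `R^b → R^a` induced (contravariantly) by `u : Fin a → Fin b`. -/
def Lhom (R : Type) [Ring R] {a b : ℕ} (u : Fin a → Fin b) :
    Amod R b ⟶ Amod R a :=
  InducedCategory.homMk (ModuleCat.ofHom (LinearMap.funLeft R R u))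

lemma Lhom_comp (R : Type) [Ring R] {a b c : ℕ} (u : Fin a → Fin b) (v : Fin b → Fin c) :
    Lhom R (v ∘ u) = Lhom R v ≫ Lhom R u :=
  InducedCategory.hom_ext (ModuleCat.hom_ext (LinearMap.funLeft_comp R R v u))

/-- For every ring with unit, the category of finitely generated free left
modules is not residually finite. -/
theorem freeModCat_not_residuallyFinite (R : Type) [Ring R] [Nontrivial R] :
    ¬ ResiduallyFiniteCat (FreeModCat R) := by
  intro h
  -- two distinct maps `R^2 → R^1`: the two coordinate projections
  set f : Amod R 2 ⟶ Amod R 1 := Lhom R (fun _ => (0 : Fin 2)) with hf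
  set g : Amod R 2 ⟶ Amod R 1 := Lhom R (fun _ => (1 : Fin 2)) with hg
  have hne : f ≠ g := by
    intro he
    have he' : LinearMap.funLeft R R (fun _ : Fin 1 => (0 : Fin 2))
        = LinearMap.funLeft R R (fun _ : Fin 1 => (1 : Fin 2)) := congrArg (fun φ => φ.hom.hom) he
    have := congrFun (DFunLike.congr_fun he'
      (fun j : Fin 2 => if j = 0 then (1 : R) else 0)) 0
    simp [LinearMap.funLeft_apply] at this
  obtain ⟨D, instS, instF, F, hF⟩ := h f g hne
  haveI := instF.fintypeObj
  haveI := instF.fintypeHom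
  -- a uniform bound on the size of hom-sets in `D`
  set B : ℕ := Finset.univ.sup (fun XY : D × D => Fintype.card (XY.1 ⟶ XY.2)) with hB
  set m : ℕ := B + 1 with hm
  -- pigeonhole on the `m` constant maps `R^m → R^1`
  have hcard : Fintype.card (F.obj (Amod R m) ⟶ F.obj (Amod R 1)) < Fintype.card (Fin m) := by
    rw [Fintype.card_fin]
    have : Fintype.card (F.obj (Amod R m) ⟶ F.obj (Amod R 1)) ≤ B := by
      rw [hB]
      exact Finset.le_sup (f := fun XY : D × D => Fintype.card (XY.1 ⟶ XY.2))
        (Finset.mem_univ (F.obj (Amod R m), F.obj (Amod R 1)))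
    omega
  obtain ⟨i, j, hij, hconst⟩ :=
    Fintype.exists_ne_map_eq_of_card_lt
      (fun i : Fin m => F.map (Lhom R (fun _ : Fin 1 => i))) hcard
  -- a map `Fin m → Fin 2` separating `i` and `j`
  classical
  set p : Fin m → Fin 2 := fun x => if x = i then 0 else 1 with hp
  have h0 : (fun _ : Fin 1 => (0 : Fin 2)) = p ∘ (fun _ : Fin 1 => i) := by
    funext x; simp [hp]
  have h1 : (fun _ : Fin 1 => (1 : Fin 2)) = p ∘ (fun _ : Fin 1 => j) := by
    funext x; simp [hp, hij.symm]
  apply hF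
  calc F.map f = F.map (Lhom R p ≫ Lhom R (fun _ : Fin 1 => i)) := by
        rw [hf, h0, Lhom_comp]
    _ = F.map (Lhom R p) ≫ F.map (Lhom R (fun _ : Fin 1 => i)) := F.map_comp _ _
    _ = F.map (Lhom R p) ≫ F.map (Lhom R (fun _ : Fin 1 => j)) := by rw [hconst]
    _ = F.map (Lhom R p ≫ Lhom R (fun _ : Fin 1 => j)) := (F.map_comp _ _).symm
    _ = F.map g := by rw [hg, h1, Lhom_comp]
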